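/- Let T₁ and T₂ be finite trees (connected acyclic simple graphs), each equipped with the uniform initial coloring. If T₁ and T₂ are 1-WL equivalent, i.e., for every round l the multiset {{χ^l(v) : v ∈ V(T₁)}} equals the multiset {{χ^l(v) : v ∈ V(T₂)}}, then T₁ and T₂ are isomorphic as graphs. Equivalently, any two non-isomorphic finite trees are distinguished by 1-WL color refinement. -/

import Mathlib

/-- The type of 1-WL colors after `l` rounds of refinement, starting from
initial colors in `C`: the round-`(l+1)` color of a vertex is the pair of its
round-`l` color and the multiset of round-`l` colors of its neighbors. -/
def WLColor (C : Type u) : ℕ → Type u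
  | 0 => C
  | l + 1 => WLColor C l × Multiset (WLColor C l)

/-- 1-WL color refinement on a finite simple graph `G` with initial coloring `χ₀`:
`χ⁰(v) = χ₀ v` and `χ^{l+1}(v) = (χ^l(v), {{χ^l(w) : w ∈ N(v)}})`. -/
noncomputable def wlColoring {V : Type v} {C : Type u} [Fintype V]
    (G : SimpleGraph V) (χ₀ : V → C) : (l : ℕ) → V → WLColor C l
  | 0 => χ₀
  | l + 1 => fun x =>
      (wlColoring G χ₀ l x,
        ((G.neighborSet x).toFinite.toFinset).val.map (wlColoring G χ₀ l))

set_option linter.unusedSectionVars false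

lemma wl_fst {V₁ V₂ C} [Fintype V₁] [Fintype V₂] (G₁ : SimpleGraph V₁) (G₂ : SimpleGraph V₂)
    (χ₁ : V₁ → C) (χ₂ : V₂ → C) {l : ℕ} {x : V₁} {y : V₂}
    (h : wlColoring G₁ χ₁ (l+1) x = wlColoring G₂ χ₂ (l+1) y) :
    wlColoring G₁ χ₁ l x = wlColoring G₂ χ₂ l y :=
  congrArg (Prod.fst : WLColor C l × Multiset (WLColor C l) → WLColor C l) h

lemma wl_snd {V₁ V₂ C} [Fintype V₁] [Fintype V₂] (G₁ : SimpleGraph V₁) (G₂ : SimpleGraph V₂)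
    (χ₁ : V₁ → C) (χ₂ : V₂ → C) {l : ℕ} {x : V₁} {y : V₂}
    (h : wlColoring G₁ χ₁ (l+1) x = wlColoring G₂ χ₂ (l+1) y) :
    ((G₁.neighborSet x).toFinite.toFinset).val.map (wlColoring G₁ χ₁ l) =
    ((G₂.neighborSet y).toFinite.toFinset).val.map (wlColoring G₂ χ₂ l) :=
  congrArg Prod.snd h

lemma wl_mono {V₁ V₂ C} [Fintype V₁] [Fintype V₂] (G₁ : SimpleGraph V₁) (G₂ : SimpleGraph V₂)
    (χ₁ : V₁ → C) (χ₂ : V₂ → C) {l m : ℕ} (hml : m ≤ l) {x : V₁} {y : V₂}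
    (h : wlColoring G₁ χ₁ l x = wlColoring G₂ χ₂ l y) :
    wlColoring G₁ χ₁ m x = wlColoring G₂ χ₂ m y := by
  induction l with
  | zero => obtain rfl := Nat.le_zero.mp hml; exact h
  | succ l ih =>
      rcases Nat.eq_or_lt_of_le hml with rfl | hlt
      · exact h
      · exact ih (by omega) (wl_fst _ _ _ _ h)

section MultisetEquiv
variable {α β γ : Type*} [DecidableEq α] [DecidableEq β]

lemma equiv_extend (s : Finset α) (t : Finset β) (f : α → γ) (g : β → γ)
    {a : α} (ha : a ∈ s) {b : β} (hb : b ∈ t) (hab : g b = f a)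
    (e' : {x // x ∈ s.erase a} ≃ {y // y ∈ t.erase b})
    (he' : ∀ x, g (e' x).1 = f x.1) :
    ∃ e : {x // x ∈ s} ≃ {y // y ∈ t}, (∀ x, g (e x).1 = f x.1) ∧ (e ⟨a, ha⟩).1 = b := by
  classical
  refine ⟨⟨fun x => if hx : x.1 = a then ⟨b, hb⟩ else
      ⟨(e' ⟨x.1, Finset.mem_erase.2 ⟨hx, x.2⟩⟩).1,
        Finset.mem_of_mem_erase (e' ⟨x.1, Finset.mem_erase.2 ⟨hx, x.2⟩⟩).2⟩,
    fun y => if hy : y.1 = b then ⟨a, ha⟩ else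
      ⟨(e'.symm ⟨y.1, Finset.mem_erase.2 ⟨hy, y.2⟩⟩).1,
        Finset.mem_of_mem_erase (e'.symm ⟨y.1, Finset.mem_erase.2 ⟨hy, y.2⟩⟩).2⟩,
    ?_, ?_⟩, ?_, ?_⟩
  · intro x
    by_cases hx : x.1 = a
    · simp only [hx, dif_pos]
      exact Subtype.ext hx.symm
    · simp only [dif_neg hx]
      have hne : (e' ⟨x.1, Finset.mem_erase.2 ⟨hx, x.2⟩⟩).1 ≠ b :=
        (Finset.mem_erase.1 (e' ⟨x.1, Finset.mem_erase.2 ⟨hx, x.2⟩⟩).2).1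
      rw [dif_neg hne]
      simp only [Subtype.coe_eta, Equiv.symm_apply_apply]
  · intro y
    by_cases hy : y.1 = b
    · simp only [hy, dif_pos]
      exact Subtype.ext hy.symm
    · simp only [dif_neg hy]
      have hne : (e'.symm ⟨y.1, Finset.mem_erase.2 ⟨hy, y.2⟩⟩).1 ≠ a :=
        (Finset.mem_erase.1 (e'.symm ⟨y.1, Finset.mem_erase.2 ⟨hy, y.2⟩⟩).2).1
      rw [dif_neg hne]
      simp only [Subtype.coe_eta, Equiv.apply_symm_apply]
  · intro x
    by_cases hx : x.1 = a
    · simp only [Equiv.coe_fn_mk, dif_pos hx]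
      rw [hab, hx]
    · simp only [Equiv.coe_fn_mk, dif_neg hx]
      exact he' _
  · simp

lemma map_erase_eq (s : Finset α) (t : Finset β) (f : α → γ) (g : β → γ)
    (h : s.val.map f = t.val.map g)
    {a : α} (ha : a ∈ s) {b : β} (hb : b ∈ t) (hab : f a = g b) :
    (s.erase a).val.map f = (t.erase b).val.map g := by
  classical
  have hs : s.val = a ::ₘ (s.erase a).val := by
    exact (Multiset.cons_erase (by exact ha)).symm
  have ht : t.val = b ::ₘ (t.erase b).val := by
    exact (Multiset.cons_erase (by exact hb)).symm
  rw [hs, ht, Multiset.map_cons, Multiset.map_cons, hab] at h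
  exact (Multiset.cons_inj_right _).1 h

lemma exists_equiv_of_map_eq (f : α → γ) (g : β → γ) :
    ∀ n (s : Finset α) (t : Finset β), s.card = n → s.val.map f = t.val.map g →
    ∃ e : {x // x ∈ s} ≃ {y // y ∈ t}, ∀ x, g (e x).1 = f x.1 := by
  classical
  intro n
  induction n with
  | zero =>
      intro s t hcard h
      obtain rfl := Finset.card_eq_zero.1 hcard
      have ht : t = ∅ := by
        have : t.val.map g = 0 := by simpa using h.symm
        have := Multiset.eq_zero_of_forall_notMem (s := t.val)
          (fun x hx => by
            have : g x ∈ t.val.map g := Multiset.mem_map_of_mem _ hx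
            rw [‹t.val.map g = 0›] at this; simp at this)
        exact Finset.ext (by simp [Finset.mem_def, this])
      subst ht
      have h1 : IsEmpty {x // x ∈ (∅ : Finset α)} := ⟨fun x => Finset.notMem_empty _ x.2⟩
      have h2 : IsEmpty {y // y ∈ (∅ : Finset β)} := ⟨fun y => Finset.notMem_empty _ y.2⟩
      exact ⟨Equiv.equivOfIsEmpty _ _, fun x => (h1.false x).elim⟩
  | succ n ih =>
      intro s t hcard h
      have hs : s.Nonempty := Finset.card_pos.1 (by omega)
      obtain ⟨a, ha⟩ := hs
      have hfa : f a ∈ t.val.map g := by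
        rw [← h]; exact Multiset.mem_map_of_mem _ ha
      obtain ⟨b, hb, hba⟩ := Multiset.mem_map.1 hfa
      have hb : b ∈ t := hb
      obtain ⟨e', he'⟩ := ih (s.erase a) (t.erase b)
        (by rw [Finset.card_erase_of_mem ha, hcard]; rfl)
        (map_erase_eq s t f g h ha hb hba.symm)
      obtain ⟨e, he, -⟩ := equiv_extend s t f g ha hb hba e' he'
      exact ⟨e, he⟩

lemma exists_equiv_of_map_eq' (f : α → γ) (g : β → γ) (s : Finset α) (t : Finset β)
    (h : s.val.map f = t.val.map g)
    {a : α} (ha : a ∈ s) {b : β} (hb : b ∈ t) (hab : f a = g b) :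
    ∃ e : {x // x ∈ s} ≃ {y // y ∈ t}, (∀ x, g (e x).1 = f x.1) ∧ (e ⟨a, ha⟩).1 = b := by
  obtain ⟨e', he'⟩ := exists_equiv_of_map_eq f g (s.erase a).card (s.erase a) (t.erase b) rfl
    (map_erase_eq s t f g h ha hb hab)
  exact equiv_extend s t f g ha hb hab.symm e' he'

end MultisetEquiv

section TreeLemmas
variable {V : Type*} [DecidableEq V] {G : SimpleGraph V}

lemma concat_isPath {u v w : V} {p : G.Walk u v} (hp : p.IsPath) (h : G.Adj v w)
    (hw : w ∉ p.support) : (p.concat h).IsPath := by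
  have : (p.concat h).reverse.IsPath := by
    rw [SimpleGraph.Walk.reverse_concat]
    exact hp.reverse.cons (by simpa [SimpleGraph.Walk.support_reverse] using hw)
  simpa only [SimpleGraph.Walk.reverse_reverse] using this.reverse

/-- On a shortest path from `r` to `u`, every vertex other than `u` is strictly closer. -/
lemma dist_lt_of_mem_shortest {r u : V} (p : G.Walk r u) (hlen : p.length = G.dist r u)
    {y : V} (hy : y ∈ p.support) (hyu : y ≠ u) : G.dist r y < G.dist r u := by
  have h1 : G.dist r y ≤ (p.takeUntil y hy).length := SimpleGraph.dist_le _
  have h2 : G.dist y u ≤ (p.dropUntil y hy).length := SimpleGraph.dist_le _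
  have h3 : (p.takeUntil y hy).length + (p.dropUntil y hy).length = p.length := by
    have := congrArg SimpleGraph.Walk.length (p.take_spec hy)
    rwa [SimpleGraph.Walk.length_append] at this
  have h4 : 0 < G.dist y u :=
    SimpleGraph.Reachable.pos_dist_of_ne ⟨p.dropUntil y hy⟩ hyu
  omega

/-- In a tree, adjacent vertices are at different distances from any root. -/
lemma tree_adj_dist_ne (hT : G.IsTree) (r : V) {u x : V} (h : G.Adj u x) :
    G.dist r u ≠ G.dist r x := by
  intro heq
  -- wlog-free: shortest path to u, extend by the edge to x
  obtain ⟨p, hp, hlen⟩ := (hT.isConnected r u).exists_path_of_dist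
  have hxu : x ≠ u := h.ne'
  have hxp : x ∉ p.support := by
    intro hx
    exact absurd heq (by
      have := dist_lt_of_mem_shortest p hlen hx hxu
      omega)
  have hcat : (p.concat h).IsPath := concat_isPath hp h hxp
  obtain ⟨q, hq, hqlen⟩ := (hT.isConnected r x).exists_path_of_dist
  have := (hT.existsUnique_path r x).unique hcat hq
  have hl := congrArg SimpleGraph.Walk.length this
  rw [SimpleGraph.Walk.length_concat, hlen, hqlen, heq] at hl
  omega

/-- Existence of the parent: a vertex at distance `d+1` has a neighbor at distance `d`. -/
lemma tree_exists_parent (hT : G.IsTree) (r : V) {u : V} {d : ℕ}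
    (hd : G.dist r u = d + 1) : ∃ x, G.Adj x u ∧ G.dist r x = d := by
  obtain ⟨p, hp, hlen⟩ := (hT.isConnected r u).exists_path_of_dist
  have hdlt : d < p.length := by omega
  have hadj : G.Adj (p.getVert d) (p.getVert (d + 1)) := p.adj_getVert_succ hdlt
  have hgv : p.getVert (d + 1) = u := by
    rw [show d + 1 = p.length by omega]; exact p.getVert_length
  rw [hgv] at hadj
  refine ⟨p.getVert d, hadj, ?_⟩
  have hmem : p.getVert d ∈ p.support :=
    SimpleGraph.Walk.mem_support_iff_exists_getVert.2 ⟨d, rfl, by omega⟩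
  have hlt : G.dist r (p.getVert d) < G.dist r u :=
    dist_lt_of_mem_shortest p hlen hmem hadj.ne
  have htri : G.dist r u ≤ G.dist r (p.getVert d) + 1 := by
    have h1 : G.dist (p.getVert d) u = 1 := SimpleGraph.dist_eq_one_iff_adj.2 hadj
    have := hT.isConnected.dist_triangle (u := r) (v := p.getVert d) (w := u)
    omega
  omega

/-- Uniqueness of the parent in a tree. -/
lemma tree_unique_parent (hT : G.IsTree) (r : V) {u x x' : V} {d : ℕ}
    (hd : G.dist r u = d + 1)
    (hx : G.Adj x u) (hxd : G.dist r x = d)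
    (hx' : G.Adj x' u) (hxd' : G.dist r x' = d) : x = x' := by
  have key : ∀ y : V, G.Adj y u → G.dist r y = d →
      ∃ (p : G.Walk r u), p.IsPath ∧ p.reverse.getVert 1 = y := by
    intro y hy hyd
    obtain ⟨p, hp, hlen⟩ := (hT.isConnected r y).exists_path_of_dist
    have hup : u ∉ p.support := by
      intro hu
      by_cases huy : u = y
      · rw [huy] at hd; omega
      · have := dist_lt_of_mem_shortest p hlen hu huy
        omega
    refine ⟨p.concat hy, concat_isPath hp hy hup, ?_⟩
    rw [SimpleGraph.Walk.reverse_concat]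
    exact (SimpleGraph.Walk.getVert_cons_succ _ _).trans (SimpleGraph.Walk.getVert_zero _)
  obtain ⟨p₁, hp₁, hv₁⟩ := key x hx hxd
  obtain ⟨p₂, hp₂, hv₂⟩ := key x' hx' hxd'
  have := (hT.existsUnique_path r u).unique hp₁ hp₂
  rw [← hv₁, ← hv₂, this]

/-- Distances in a connected graph on a fintype are at most `card - 1`. -/
lemma tree_dist_lt_card [Fintype V] (hT : G.IsTree) (r u : V) :
    G.dist r u < Fintype.card V := by
  obtain ⟨p, hp, hlen⟩ := (hT.isConnected r u).exists_path_of_dist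
  rw [← hlen]
  exact hp.length_lt

end TreeLemmas

section Main
variable {V₁ V₂ : Type} {C : Type} [Fintype V₁] [Fintype V₂]
  [DecidableEq V₁] [DecidableEq V₂]

lemma mem_nbFinset {V : Type} [Fintype V] (G : SimpleGraph V) {w u : V} (h : G.Adj w u) :
    u ∈ (G.neighborSet w).toFinite.toFinset :=
  (Set.Finite.mem_toFinset _).2 h

lemma adj_of_mem_nbFinset {V : Type} [Fintype V] (G : SimpleGraph V) {w u : V}
    (h : u ∈ (G.neighborSet w).toFinite.toFinset) : G.Adj w u :=
  (Set.Finite.mem_toFinset _).1 h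

lemma exists_good (T₁ : SimpleGraph V₁) (T₂ : SimpleGraph V₂)
    (h₁ : T₁.IsTree) (h₂ : T₂.IsTree) (χ₁ : V₁ → C) (χ₂ : V₂ → C)
    (v₁ : V₁) (v₂ : V₂) (L : ℕ)
    (hv : wlColoring T₁ χ₁ L v₁ = wlColoring T₂ χ₂ L v₂) :
    ∀ d, d ≤ L → ∃ F : (∀ u : V₁, T₁.dist v₁ u ≤ d → V₂),
      (∀ u h, T₂.dist v₂ (F u h) = T₁.dist v₁ u) ∧
      (∀ u h, wlColoring T₂ χ₂ (L - T₁.dist v₁ u) (F u h) =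
              wlColoring T₁ χ₁ (L - T₁.dist v₁ u) u) ∧
      (∀ u h u' h', F u h = F u' h' → u = u') ∧
      (∀ u h u' h', T₁.Adj u u' → T₂.Adj (F u h) (F u' h')) := by
  intro d
  induction d with
  | zero =>
      intro _
      refine ⟨fun _ _ => v₂, ?_, ?_, ?_, ?_⟩
      · intro u h
        obtain rfl : v₁ = u := (h₁.isConnected.dist_eq_zero_iff).1 (Nat.le_zero.1 h)
        rw [SimpleGraph.dist_self, SimpleGraph.dist_self]
      · intro u h
        obtain rfl : v₁ = u := (h₁.isConnected.dist_eq_zero_iff).1 (Nat.le_zero.1 h)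
        rw [SimpleGraph.dist_self, Nat.sub_zero]
        exact hv.symm
      · intro u h u' h'
        obtain rfl : v₁ = u := (h₁.isConnected.dist_eq_zero_iff).1 (Nat.le_zero.1 h)
        obtain rfl : v₁ = u' := (h₁.isConnected.dist_eq_zero_iff).1 (Nat.le_zero.1 h')
        exact fun _ => rfl
      · intro u h u' h' hadj
        obtain rfl : v₁ = u := (h₁.isConnected.dist_eq_zero_iff).1 (Nat.le_zero.1 h)
        obtain rfl : v₁ = u' := (h₁.isConnected.dist_eq_zero_iff).1 (Nat.le_zero.1 h')
        exact absurd hadj (T₁.irrefl)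
  | succ d ih =>
      intro hdL
      obtain ⟨F, hdist, hcol, hinj, hadj⟩ := ih (by omega)
      -- the matching equivalences on neighborhoods, for every vertex at depth `d`
      have key : ∀ w (hw : T₁.dist v₁ w = d) (hwle : T₁.dist v₁ w ≤ d),
          ∃ e : {x // x ∈ (T₁.neighborSet w).toFinite.toFinset} ≃
                {y // y ∈ (T₂.neighborSet (F w hwle)).toFinite.toFinset},
            (∀ x, wlColoring T₂ χ₂ (L - (d+1)) (e x).1 =
                  wlColoring T₁ χ₁ (L - (d+1)) x.1) ∧
            (∀ (x : {x // x ∈ (T₁.neighborSet w).toFinite.toFinset})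
               (_ : T₁.dist v₁ x.1 < d) (hxle : T₁.dist v₁ x.1 ≤ d),
               (e x).1 = F x.1 hxle) := by
        intro w hw hwle
        have hcw := hcol w hwle
        rw [hw] at hcw
        have hLd : L - d = (L - (d+1)) + 1 := by omega
        rw [hLd] at hcw
        have multis := wl_snd T₂ T₁ χ₂ χ₁ hcw
        rcases Nat.eq_zero_or_pos d with rfl | hdpos
        · obtain ⟨e, he⟩ := exists_equiv_of_map_eq
            (wlColoring T₁ χ₁ (L - (0+1))) (wlColoring T₂ χ₂ (L - (0+1)))
            _ _ _ rfl multis.symm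
          exact ⟨e, he, fun x hx _ => absurd hx (Nat.not_lt_zero _)⟩
        · obtain ⟨d', rfl⟩ : ∃ d', d = d' + 1 := ⟨d - 1, by omega⟩
          obtain ⟨pw, hpadj, hpd⟩ := tree_exists_parent h₁ v₁ hw
          have hple : T₁.dist v₁ pw ≤ d' + 1 := by omega
          have hma : pw ∈ (T₁.neighborSet w).toFinite.toFinset :=
            mem_nbFinset T₁ hpadj.symm
          have hmb : F pw hple ∈ (T₂.neighborSet (F w hwle)).toFinite.toFinset :=
            mem_nbFinset T₂ (hadj w hwle pw hple hpadj.symm)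
          have hab : wlColoring T₁ χ₁ (L - (d'+1+1)) pw =
              wlColoring T₂ χ₂ (L - (d'+1+1)) (F pw hple) := by
            have := hcol pw hple
            rw [hpd] at this
            exact (wl_mono T₂ T₁ χ₂ χ₁ (by omega) this).symm
          obtain ⟨e, he1, he2⟩ := exists_equiv_of_map_eq'
            (wlColoring T₁ χ₁ (L - (d'+1+1))) (wlColoring T₂ χ₂ (L - (d'+1+1)))
            _ _ multis.symm hma hmb hab
          refine ⟨e, he1, ?_⟩
          rintro ⟨xv, hxm⟩ hxlt hxle
          dsimp only at hxlt hxle ⊢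
          have hadjwx : T₁.Adj w xv := adj_of_mem_nbFinset T₁ hxm
          have hxd : T₁.dist v₁ xv = d' := by
            have h1 : T₁.dist xv w = 1 :=
              SimpleGraph.dist_eq_one_iff_adj.2 hadjwx.symm
            have htri := h₁.isConnected.dist_triangle (u := v₁) (v := xv) (w := w)
            omega
          have hxpw : xv = pw :=
            tree_unique_parent h₁ v₁ hw hadjwx.symm hxd hpadj hpd
          subst hxpw
          rw [he2]
      choose E hE1 hE2 using key
      -- parents of the new vertices
      have hparents : ∀ u : V₁, ¬ T₁.dist v₁ u ≤ d → T₁.dist v₁ u ≤ d + 1 →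
          ∃ w, T₁.Adj w u ∧ T₁.dist v₁ w = d := by
        intro u h' h
        obtain ⟨w, hwa, hwd⟩ := tree_exists_parent h₁ v₁ (show T₁.dist v₁ u = d + 1 by omega)
        exact ⟨w, hwa, hwd⟩
      choose par hpar1 hpar2 using hparents
      -- the new level of the map, with its characterization
      obtain ⟨G', hG'⟩ : ∃ G' : (∀ u : V₁, ¬ T₁.dist v₁ u ≤ d → T₁.dist v₁ u ≤ d + 1 → V₂),
          ∀ u h' h, ∃ (w : V₁) (hw : T₁.dist v₁ w = d) (hwle : T₁.dist v₁ w ≤ d)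
            (hm : u ∈ (T₁.neighborSet w).toFinite.toFinset),
            T₁.Adj w u ∧ G' u h' h = (E w hw hwle ⟨u, hm⟩).1 :=
        ⟨fun u h' h => (E (par u h' h) (hpar2 u h' h) (le_of_eq (hpar2 u h' h))
            ⟨u, mem_nbFinset T₁ (hpar1 u h' h)⟩).1,
         fun u h' h => ⟨par u h' h, hpar2 u h' h, le_of_eq (hpar2 u h' h),
            mem_nbFinset T₁ (hpar1 u h' h), hpar1 u h' h, rfl⟩⟩
      -- distance of the new values
      have hGdist : ∀ u h' h, T₂.dist v₂ (G' u h' h) = d + 1 := by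
        intro u h' h
        obtain ⟨w, hw, hwle, hm, hwadj, hval⟩ := hG' u h' h
        have hymem := (E w hw hwle ⟨u, hm⟩).2
        have hyadj : T₂.Adj (F w hwle) (G' u h' h) := by
          rw [hval]; exact adj_of_mem_nbFinset T₂ hymem
        have hFwd : T₂.dist v₂ (F w hwle) = d := by rw [hdist w hwle, hw]
        have hne : T₂.dist v₂ (G' u h' h) ≠ d := fun hh =>
          tree_adj_dist_ne h₂ v₂ hyadj (by rw [hFwd, hh])
        have htri1 : T₂.dist v₂ (G' u h' h) ≤ d + 1 := by
          have hone : T₂.dist (F w hwle) (G' u h' h) = 1 :=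
            SimpleGraph.dist_eq_one_iff_adj.2 hyadj
          have := h₂.isConnected.dist_triangle (u := v₂) (v := F w hwle) (w := G' u h' h)
          omega
        have htri2 : d ≤ T₂.dist v₂ (G' u h' h) + 1 := by
          have hone : T₂.dist (G' u h' h) (F w hwle) = 1 :=
            SimpleGraph.dist_eq_one_iff_adj.2 hyadj.symm
          have := h₂.isConnected.dist_triangle (u := v₂) (v := G' u h' h) (w := F w hwle)
          omega
        -- exclude distance d - 1 when d ≥ 1
        rcases Nat.lt_or_ge (T₂.dist v₂ (G' u h' h)) d with hlt | hge
        · exfalso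
          obtain ⟨d', rfl⟩ : ∃ d', d = d' + 1 := ⟨d - 1, by omega⟩
          have hyd : T₂.dist v₂ (G' u h' h) = d' := by omega
          obtain ⟨pw, hpadj, hpd⟩ := tree_exists_parent h₁ v₁ hw
          have hple : T₁.dist v₁ pw ≤ d' + 1 := by omega
          have hpm : pw ∈ (T₁.neighborSet w).toFinite.toFinset :=
            mem_nbFinset T₁ hpadj.symm
          have hEpw : (E w hw hwle ⟨pw, hpm⟩).1 = F pw hple :=
            hE2 w hw hwle ⟨pw, hpm⟩ (by dsimp only; omega) hple
          have hFpwd : T₂.dist v₂ (F pw hple) = d' := by rw [hdist pw hple, hpd]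
          have hFpwadj : T₂.Adj (F pw hple) (F w hwle) :=
            (hadj w hwle pw hple hpadj.symm).symm
          have hupw : G' u h' h = F pw hple :=
            tree_unique_parent h₂ v₂ hFwd hyadj.symm hyd hFpwadj hFpwd
          have hEu : (E w hw hwle ⟨u, hm⟩).1 = (E w hw hwle ⟨pw, hpm⟩).1 := by
            rw [hEpw, ← hupw, hval]
          have := (E w hw hwle).injective (Subtype.ext hEu)
          have hupw' : u = pw := congrArg Subtype.val this
          have : T₁.dist v₁ u = d' + 1 + 1 := by omega
          rw [hupw', hpd] at this
          omega
        · omega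
      -- assemble the next level
      refine ⟨fun u h => if h' : T₁.dist v₁ u ≤ d then F u h' else G' u h' h,
        ?_, ?_, ?_, ?_⟩
      · intro u h
        by_cases h' : T₁.dist v₁ u ≤ d
        · simp only [dif_pos h']; exact hdist u h'
        · simp only [dif_neg h']; rw [hGdist u h' h]; omega
      · intro u h
        by_cases h' : T₁.dist v₁ u ≤ d
        · simp only [dif_pos h']; exact hcol u h'
        · simp only [dif_neg h']
          have hu : T₁.dist v₁ u = d + 1 := by omega
          obtain ⟨w, hw, hwle, hm, hwadj, hval⟩ := hG' u h' h
          rw [hval, hu]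
          exact hE1 w hw hwle ⟨u, hm⟩
      · intro u h u' h' heq
        by_cases hA : T₁.dist v₁ u ≤ d <;> by_cases hB : T₁.dist v₁ u' ≤ d
        · simp only [dif_pos hA, dif_pos hB] at heq
          exact hinj u hA u' hB heq
        · simp only [dif_pos hA, dif_neg hB] at heq
          exfalso
          have hd1 := hdist u hA
          have hd2 := hGdist u' hB h'
          rw [heq] at hd1
          omega
        · simp only [dif_neg hA, dif_pos hB] at heq
          exfalso
          have hd1 := hdist u' hB
          have hd2 := hGdist u hA h
          rw [← heq] at hd1
          omega
        · simp only [dif_neg hA, dif_neg hB] at heq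
          obtain ⟨w, hw, hwle, hm, hwadj, hval⟩ := hG' u hA h
          obtain ⟨w', hw', hwle', hm', hwadj', hval'⟩ := hG' u' hB h'
          have hyadj₁ : T₂.Adj (F w hwle) (G' u hA h) := by
            rw [hval]; exact adj_of_mem_nbFinset T₂ (E w hw hwle ⟨u, hm⟩).2
          have hyadj₂ : T₂.Adj (F w' hwle') (G' u' hB h') := by
            rw [hval']; exact adj_of_mem_nbFinset T₂ (E w' hw' hwle' ⟨u', hm'⟩).2
          rw [← heq] at hyadj₂
          have hFeq : F w hwle = F w' hwle' :=
            tree_unique_parent h₂ v₂ (hGdist u hA h) hyadj₁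
              (by rw [hdist w hwle, hw]) hyadj₂ (by rw [hdist w' hwle', hw'])
          have hww : w = w' := hinj w hwle w' hwle' hFeq
          subst hww
          rw [hval, hval'] at heq
          have h3 : (⟨u, hm⟩ : {x // x ∈ (T₁.neighborSet w).toFinite.toFinset}) = ⟨u', hm'⟩ :=
            (E w hw hwle).injective (Subtype.ext heq)
          exact congrArg Subtype.val h3
      · intro u h u' h' huu'
        by_cases hA : T₁.dist v₁ u ≤ d <;> by_cases hB : T₁.dist v₁ u' ≤ d
        · simp only [dif_pos hA, dif_pos hB]
          exact hadj u hA u' hB huu'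
        · simp only [dif_pos hA, dif_neg hB]
          have hdu' : T₁.dist v₁ u' = d + 1 := by omega
          have hdu : T₁.dist v₁ u = d := by
            have h1 : T₁.dist u u' = 1 := SimpleGraph.dist_eq_one_iff_adj.2 huu'
            have htri := h₁.isConnected.dist_triangle (u := v₁) (v := u) (w := u')
            omega
          obtain ⟨w, hw, hwle, hm, hwadj, hval⟩ := hG' u' hB h'
          have huw : u = w :=
            tree_unique_parent h₁ v₁ hdu' huu' hdu hwadj hw
          subst huw
          rw [hval]
          exact adj_of_mem_nbFinset T₂ (E u hw hwle ⟨u', hm⟩).2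
        · simp only [dif_neg hA, dif_pos hB]
          have hdu : T₁.dist v₁ u = d + 1 := by omega
          have hdu' : T₁.dist v₁ u' = d := by
            have h1 : T₁.dist u' u = 1 := SimpleGraph.dist_eq_one_iff_adj.2 huu'.symm
            have htri := h₁.isConnected.dist_triangle (u := v₁) (v := u') (w := u)
            omega
          obtain ⟨w, hw, hwle, hm, hwadj, hval⟩ := hG' u hA h
          have huw : u' = w :=
            tree_unique_parent h₁ v₁ hdu huu'.symm hdu' hwadj hw
          subst huw
          rw [hval]
          exact (adj_of_mem_nbFinset T₂ (E u' hw hwle ⟨u, hm⟩).2).symm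
        · exfalso
          have hdu : T₁.dist v₁ u = d + 1 := by omega
          have hdu' : T₁.dist v₁ u' = d + 1 := by omega
          exact tree_adj_dist_ne h₁ v₁ huu' (by rw [hdu, hdu'])

end Main

/-- Any two finite trees that are 1-WL equivalent (with the uniform initial
coloring) are isomorphic; equivalently, 1-WL color refinement distinguishes
any two non-isomorphic finite trees. -/
theorem wl_equivalent_trees_isomorphic
    {V₁ V₂ : Type} [Fintype V₁] [Fintype V₂]
    (T₁ : SimpleGraph V₁) (T₂ : SimpleGraph V₂)
    (h₁ : T₁.IsTree) (h₂ : T₂.IsTree)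
    (hWL : ∀ l : ℕ,
      (Finset.univ : Finset V₁).val.map (wlColoring T₁ (fun _ => ()) l) =
      (Finset.univ : Finset V₂).val.map (wlColoring T₂ (fun _ => ()) l)) :
    Nonempty (T₁ ≃g T₂) := by
  classical
  have hne₁ : Nonempty V₁ := h₁.isConnected.nonempty
  set L := Fintype.card V₁ with hL
  have hcard : Fintype.card V₁ = Fintype.card V₂ := by
    have := congrArg Multiset.card (hWL 0)
    simpa using this
  obtain ⟨v₁⟩ := hne₁
  have hmem : wlColoring T₁ (fun _ => ()) L v₁ ∈
      (Finset.univ : Finset V₂).val.map (wlColoring T₂ (fun _ => ()) L) := by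
    rw [← hWL L]
    exact Multiset.mem_map_of_mem _ (Finset.mem_univ v₁)
  obtain ⟨v₂, -, hv₂⟩ := Multiset.mem_map.1 hmem
  obtain ⟨F, hdist, hcol, hinj, hadj⟩ :=
    exists_good T₁ T₂ h₁ h₂ (fun _ => ()) (fun _ => ()) v₁ v₂ L hv₂.symm L le_rfl
  have hall : ∀ u, T₁.dist v₁ u ≤ L := fun u => (tree_dist_lt_card h₁ v₁ u).le
  set f : V₁ → V₂ := fun u => F u (hall u) with hf
  have hfinj : Function.Injective f := fun a b h => hinj a (hall a) b (hall b) h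
  have hbij : Function.Bijective f :=
    (Fintype.bijective_iff_injective_and_card f).2 ⟨hfinj, hcard⟩
  have hfwd : ∀ u u', T₁.Adj u u' → T₂.Adj (f u) (f u') :=
    fun u u' h => hadj u (hall u) u' (hall u') h
  -- edge counting to reflect adjacency
  have h1e : T₁.edgeFinset.card = L - 1 := by
    have := h₁.card_edgeFinset
    omega
  have h2e : T₂.edgeFinset.card = L - 1 := by
    have := h₂.card_edgeFinset
    omega
  have himg : T₁.edgeFinset.image (Sym2.map f) ⊆ T₂.edgeFinset := by
    intro e he
    rw [Finset.mem_image] at he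
    obtain ⟨a, ha, rfl⟩ := he
    rw [SimpleGraph.mem_edgeFinset] at ha ⊢
    induction a with
    | _ x y => exact (T₂.mem_edgeSet).2 (hfwd x y ((T₁.mem_edgeSet).1 ha))
  have hcardimg : (T₁.edgeFinset.image (Sym2.map f)).card = T₂.edgeFinset.card := by
    rw [Finset.card_image_of_injective _ (Sym2.map.injective hfinj), h1e, h2e]
  have himg_eq : T₁.edgeFinset.image (Sym2.map f) = T₂.edgeFinset :=
    Finset.eq_of_subset_of_card_le himg (le_of_eq hcardimg.symm)
  have hback : ∀ u u', T₂.Adj (f u) (f u') → T₁.Adj u u' := by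
    intro u u' h
    have hmem2 : s(f u, f u') ∈ T₂.edgeFinset :=
      SimpleGraph.mem_edgeFinset.2 ((T₂.mem_edgeSet).2 h)
    rw [← himg_eq, Finset.mem_image] at hmem2
    obtain ⟨a, ha, hmap⟩ := hmem2
    have haeq : a = s(u, u') := Sym2.map.injective hfinj (by rw [hmap]; rfl)
    subst haeq
    exact (T₁.mem_edgeSet).1 (SimpleGraph.mem_edgeFinset.1 ha)
  exact ⟨⟨Equiv.ofBijective f hbij, fun {a b} =>
    ⟨fun h => hback a b h, fun h => hfwd a b h⟩⟩⟩
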